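/- Let A ⊆ ℤ⁺ be geometrically sparse. Then for every n ≥ 1 there exist real numbers c, d > 0 such that every nonzero a ∈ Σ_n(±A) can be written as a = a_1 + ⋯ + a_k + q, where 0 ≤ k ≤ n, each a_i ∈ ±A with |a_i| < c·|a|, and q ∈ ℤ with |q| ≤ d. -/

import Mathlib

open Filter Pointwise

/-- The `k`-fold sumset `X + ⋯ + X` (`k` times) of a set of integers. -/
def kFold (X : Set ℤ) (k : ℕ) : Set ℤ :=
  {z : ℤ | ∃ f : Fin k → ℤ, (∀ i, f i ∈ X) ∧ z = ∑ i, f i}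

/-- `Σ_n(X) = ⋃_{k=1}^n k(X)`. -/
def sigmaSum (n : ℕ) (X : Set ℤ) : Set ℤ :=
  ⋃ k ∈ Finset.Icc 1 n, kFold X k

/-- `±A = {x ∈ ℤ : |x| ∈ A}`. -/
def pmSet (A : Set ℤ) : Set ℤ := {x : ℤ | |x| ∈ A}

/-- The lower asymptotic density of a set of naturals:
`liminf_{n → ∞} |A ∩ {1,…,n}| / n`. -/
noncomputable def lowerDensity (A : Set ℕ) : ℝ :=
  Filter.liminf (fun n : ℕ => (Set.ncard (A ∩ Set.Icc 1 n) : ℝ) / n) Filter.atTop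

/-- The set of naturals whose image in `ℤ` lies in `S`. -/
def intSetToNat (S : Set ℤ) : Set ℕ := {n : ℕ | (n : ℤ) ∈ S}

/-- `A ⊆ ℤ` is sufficiently sparse if `δ̲(Σ_n(±A) ∩ ℕ) = 0` for all `n ≥ 1`. -/
def SuffSparse (A : Set ℤ) : Prop :=
  ∀ n : ℕ, 1 ≤ n → lowerDensity (intSetToNat (sigmaSum n (pmSet A))) = 0

/-- A set `S` of (positive) reals is geometric if `{s/t : s, t ∈ S, t ≤ s}` is a closed
and discrete subset of `ℝ`. -/
def IsGeometric (S : Set ℝ) : Prop :=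
  IsClosed {x : ℝ | ∃ s ∈ S, ∃ t ∈ S, t ≤ s ∧ x = s / t} ∧
    DiscreteTopology {x : ℝ | ∃ s ∈ S, ∃ t ∈ S, t ≤ s ∧ x = s / t}

/-- `A ⊆ ℤ` is geometrically sparse if there is `f : A → ℝ⁺` with `f(A)` geometric and
`sup_{a ∈ A} |a − f(a)| < ∞`. -/
def GeomSparse (A : Set ℤ) : Prop :=
  ∃ f : ℤ → ℝ, (∀ a ∈ A, 0 < f a) ∧ IsGeometric (f '' A) ∧
    ∃ C : ℝ, ∀ a ∈ A, |(a : ℝ) - f a| ≤ C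

section Auxiliary

lemma ultra_pigeon {α : Type*} [Fintype α] (U : Ultrafilter ℕ) (g : ℕ → α) :
    ∃ a, ∀ᶠ t in (U : Filter ℕ), g t = a := by
  by_contra h
  push_neg at h
  have h' : ∀ a : α, ∀ᶠ t in (U : Filter ℕ), g t ≠ a := by
    intro a
    have := h a
    exact this
  have h2 : ∀ᶠ t in (U : Filter ℕ), ∀ a : α, g t ≠ a := eventually_all.mpr h'
  obtain ⟨t, ht⟩ := h2.exists
  exact ht (g t) rfl

lemma key_lemma (m : ℕ) (S : Set ℝ) (hSpos : ∀ x ∈ S, 0 < x)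
    (hcl : IsClosed {x : ℝ | ∃ s ∈ S, ∃ t ∈ S, t ≤ s ∧ x = s / t})
    (hd : DiscreteTopology {x : ℝ | ∃ s ∈ S, ∃ t ∈ S, t ≤ s ∧ x = s / t}) :
    ∃ ε : ℝ, 0 < ε ∧ ∀ (T : Finset (Fin m)) (u : Fin m → ℝ),
      (∀ i ∈ T, |u i| ∈ S) →
      (∀ i ∈ T, ε * |u i| ≤ |∑ j ∈ T, u j|) ∨
        ∃ P ⊆ T, P.Nonempty ∧ ∑ j ∈ P, u j = 0 := by
  classical
  set R : Set ℝ := {x : ℝ | ∃ s ∈ S, ∃ t ∈ S, t ≤ s ∧ x = s / t} with hRdef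
  by_contra hcon
  push_neg at hcon
  have hbad : ∀ t : ℕ, ∃ T : Finset (Fin m), ∃ u : Fin m → ℝ,
      (∀ i ∈ T, |u i| ∈ S) ∧ (∃ i ∈ T, |∑ j ∈ T, u j| < 1/((t:ℝ)+1) * |u i|) ∧
      ∀ P ⊆ T, P.Nonempty → ∑ j ∈ P, u j ≠ 0 :=
    fun t => hcon (1/((t:ℝ)+1)) (by positivity)
  choose T u hmem hex hnz using hbad
  choose istar histar hstar using hex
  have hTne : ∀ t, (T t).Nonempty := fun t => ⟨istar t, histar t⟩
  have hmaxex : ∀ t, ∃ j ∈ T t, ∀ i ∈ T t, |u t i| ≤ |u t j| :=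
    fun t => Finset.exists_max_image (T t) (fun i => |u t i|) (hTne t)
  choose jmax hjmax hjle using hmaxex
  set U : Ultrafilter ℕ := Ultrafilter.of atTop with hUdef
  have hUle : (U : Filter ℕ) ≤ atTop := Ultrafilter.of_le _
  obtain ⟨T₀, hT₀⟩ := ultra_pigeon U T
  obtain ⟨j₀, hj₀⟩ := ultra_pigeon U jmax
  obtain ⟨i₀, hi₀⟩ := ultra_pigeon U istar
  obtain ⟨σ, hσ⟩ := ultra_pigeon U (fun t => (fun i => decide (0 ≤ u t i)))
  set M : ℕ → ℝ := fun t => |u t j₀| with hMdef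
  set r : ℕ → Fin m → ℝ := fun t i => |u t i| / M t with hrdef
  set sgn : Fin m → ℝ := fun i => if σ i then 1 else -1 with hsgndef
  -- basic eventual facts
  have hj₀T₀ : j₀ ∈ T₀ := by
    obtain ⟨t, h1, h2⟩ := (hT₀.and hj₀).exists
    rw [← h1, ← h2]; exact hjmax t
  have hi₀T₀ : i₀ ∈ T₀ := by
    obtain ⟨t, h1, h2⟩ := (hT₀.and hi₀).exists
    rw [← h1, ← h2]; exact histar t
  have hbaseS : ∀ᶠ t in (U : Filter ℕ), ∀ i ∈ T₀, |u t i| ∈ S := by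
    filter_upwards [hT₀] with t h1
    intro i hi
    exact hmem t i (h1 ▸ hi)
  have hMpos : ∀ᶠ t in (U : Filter ℕ), 0 < M t := by
    filter_upwards [hbaseS] with t h1
    exact hSpos _ (h1 j₀ hj₀T₀)
  have hMmax : ∀ᶠ t in (U : Filter ℕ), ∀ i ∈ T₀, |u t i| ≤ M t := by
    filter_upwards [hT₀, hj₀] with t h1 h2
    intro i hi
    have := hjle t i (h1 ▸ hi)
    rwa [h2] at this
  have hsign : ∀ᶠ t in (U : Filter ℕ), ∀ i ∈ T₀, u t i = sgn i * |u t i| := by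
    filter_upwards [hσ] with t h1
    intro i _
    have hdec : decide (0 ≤ u t i) = σ i := congrFun h1 i
    by_cases h : 0 ≤ u t i
    · have : σ i = true := by rw [← hdec]; simp [h]
      simp [hsgndef, this, abs_of_nonneg h]
    · have : σ i = false := by rw [← hdec]; simp [h]
      simp [hsgndef, this, abs_of_neg (lt_of_not_ge h)]
  have hrIcc : ∀ i ∈ T₀, ∀ᶠ t in (U : Filter ℕ), r t i ∈ Set.Icc (0:ℝ) 1 := by
    intro i hi
    filter_upwards [hMpos, hMmax] with t h1 h2
    exact ⟨div_nonneg (abs_nonneg _) h1.le, (div_le_one h1).mpr (h2 i hi)⟩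
  have hcex : ∀ i : Fin m, ∃ cv : ℝ, i ∈ T₀ →
      (cv ∈ Set.Icc (0:ℝ) 1 ∧ Tendsto (fun t => r t i) (U : Filter ℕ) (nhds cv)) := by
    intro i
    by_cases hi : i ∈ T₀
    · have hle : (U.map (fun t => r t i) : Filter ℝ) ≤ Filter.principal (Set.Icc (0:ℝ) 1) := by
        rw [Ultrafilter.coe_map, le_principal_iff, mem_map]
        exact hrIcc i hi
      obtain ⟨cv, hcv, hcvle⟩ := isCompact_Icc.ultrafilter_le_nhds (U.map (fun t => r t i)) hle
      rw [Ultrafilter.coe_map] at hcvle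
      exact ⟨cv, fun _ => ⟨hcv, hcvle⟩⟩
    · exact ⟨0, fun h => absurd h hi⟩
  choose c hc using hcex
  set P : Finset (Fin m) := T₀.filter (fun i => 0 < c i) with hPdef
  have hcj₀ : c j₀ = 1 := by
    have h1 : ∀ᶠ t in (U : Filter ℕ), r t j₀ = 1 := by
      filter_upwards [hMpos] with t ht
      exact div_self (ne_of_gt ht)
    have h2 : Tendsto (fun t => r t j₀) (U : Filter ℕ) (nhds 1) :=
      tendsto_const_nhds.congr' (h1.mono fun t ht => ht.symm)
    exact tendsto_nhds_unique ((hc j₀ hj₀T₀).2) h2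
  have hPj₀ : j₀ ∈ P := by
    rw [hPdef, Finset.mem_filter]
    exact ⟨hj₀T₀, by rw [hcj₀]; norm_num⟩
  -- eventual constancy of ratios on P
  have hconst : ∀ i ∈ P, ∀ᶠ t in (U : Filter ℕ), |u t i| = c i * M t := by
    intro i hiP
    rw [hPdef, Finset.mem_filter] at hiP
    obtain ⟨hiT, hci⟩ := hiP
    have htr : Tendsto (fun t => r t i) (U : Filter ℕ) (nhds (c i)) := (hc i hiT).2
    have hρ : Tendsto (fun t => (r t i)⁻¹) (U : Filter ℕ) (nhds (c i)⁻¹) :=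
      htr.inv₀ (ne_of_gt hci)
    have hρR : ∀ᶠ t in (U : Filter ℕ), (r t i)⁻¹ ∈ R := by
      filter_upwards [hbaseS, hMmax] with t h1 h2
      refine ⟨M t, h1 j₀ hj₀T₀, |u t i|, h1 i hiT, h2 i hiT, ?_⟩
      rw [hrdef]
      simp [inv_div]
    have haR : (c i)⁻¹ ∈ R := hcl.mem_of_tendsto hρ hρR
    by_cases heq : ∀ᶠ t in (U : Filter ℕ), (r t i)⁻¹ = (c i)⁻¹
    · filter_upwards [heq, hMpos, hbaseS] with t h1 h2 h3
      have hupos : 0 < |u t i| := hSpos _ (h3 i hiT)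
      have hr : r t i = c i := by
        have := congrArg (·⁻¹) h1
        simpa using this
      rw [hrdef] at hr
      field_simp at hr
      linarith [hr]
    · exfalso
      have hne : ∀ᶠ t in (U : Filter ℕ), (r t i)⁻¹ ≠ (c i)⁻¹ :=
        Ultrafilter.eventually_not.mpr heq
      have hbot := discreteTopology_subtype_iff.mp hd ((c i)⁻¹) haR
      have hle2 : Filter.map (fun t => (r t i)⁻¹) (U : Filter ℕ) ≤
          nhdsWithin ((c i)⁻¹) {((c i)⁻¹)}ᶜ ⊓ Filter.principal R := by
        refine le_inf ?_ ?_
        · rw [nhdsWithin]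
          refine le_inf hρ ?_
          rw [le_principal_iff, mem_map]
          filter_upwards [hne] with t ht
          simpa using ht
        · rw [le_principal_iff, mem_map]
          exact hρR
      rw [hbot, le_bot_iff] at hle2
      exact (Filter.map_neBot).ne hle2
  -- the normalized total sum tends to 0
  have htot0 : Tendsto (fun t => (∑ j ∈ T₀, u t j) / M t) (U : Filter ℕ) (nhds 0) := by
    rw [tendsto_zero_iff_abs_tendsto_zero]
    apply squeeze_zero' (Eventually.of_forall fun t => abs_nonneg _)
    · show ∀ᶠ t in (U : Filter ℕ), |(∑ j ∈ T₀, u t j) / M t| ≤ 1/((t:ℝ)+1)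
      filter_upwards [hT₀, hi₀, hMpos, hMmax] with t h1 h2 h3 h4
      have hlt := hstar t
      rw [h1, h2] at hlt
      have h5 : |u t i₀| ≤ M t := h4 i₀ hi₀T₀
      rw [abs_div, abs_of_pos h3, div_le_iff₀ h3]
      calc |∑ j ∈ T₀, u t j| ≤ 1/((t:ℝ)+1) * |u t i₀| := le_of_lt hlt
        _ ≤ 1/((t:ℝ)+1) * M t := by
            apply mul_le_mul_of_nonneg_left h5 (by positivity)
    · exact tendsto_one_div_add_atTop_nhds_zero_nat.mono_left hUle
  -- the normalized total sum tends to ∑ sgn * c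
  have htotα : Tendsto (fun t => (∑ j ∈ T₀, u t j) / M t) (U : Filter ℕ)
      (nhds (∑ j ∈ T₀, sgn j * c j)) := by
    have hev : ∀ᶠ t in (U : Filter ℕ),
        (∑ j ∈ T₀, sgn j * r t j) = (∑ j ∈ T₀, u t j) / M t := by
      filter_upwards [hsign] with t h1
      rw [Finset.sum_div]
      apply Finset.sum_congr rfl
      intro j hj
      rw [hrdef]
      rw [h1 j hj]
      ring
    have h2 : Tendsto (fun t => ∑ j ∈ T₀, sgn j * r t j) (U : Filter ℕ)
        (nhds (∑ j ∈ T₀, sgn j * c j)) := by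
      apply tendsto_finset_sum
      intro j hj
      exact tendsto_const_nhds.mul (hc j hj).2
    exact h2.congr' hev
  have hα : ∑ j ∈ T₀, sgn j * c j = 0 := tendsto_nhds_unique htotα htot0
  have hPα : ∑ j ∈ P, sgn j * c j = 0 := by
    rw [← hα]
    apply Finset.sum_subset (Finset.filter_subset _ _)
    intro x hx hnx
    have hcx0 : c x = 0 := by
      have h0 : ¬ 0 < c x := by simpa [Finset.mem_filter, hx] using hnx
      have h1 := (hc x hx).1.1
      linarith
    rw [hcx0, mul_zero]
  -- derive the contradiction
  have hfin : ∀ᶠ t in (U : Filter ℕ), T t = T₀ ∧ (∀ i ∈ P, |u t i| = c i * M t) ∧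
      (∀ i ∈ T₀, u t i = sgn i * |u t i|) := by
    refine hT₀.and (Eventually.and ?_ hsign)
    exact (eventually_all_finset P).mpr hconst
  obtain ⟨t, ht1, ht2, ht3⟩ := hfin.exists
  have hzero : ∑ j ∈ P, u t j = 0 := by
    have : ∑ j ∈ P, u t j = (∑ j ∈ P, sgn j * c j) * M t := by
      rw [Finset.sum_mul]
      apply Finset.sum_congr rfl
      intro j hj
      rw [ht3 j (Finset.filter_subset _ _ hj), ht2 j hj]
      ring
    rw [this, hPα, zero_mul]
  exact hnz t P (by rw [ht1]; exact Finset.filter_subset _ _) ⟨j₀, hPj₀⟩ hzero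


lemma recur_lemma {n : ℕ} (ε C : ℝ) (hC : 0 ≤ C) (u : Fin n → ℝ) (w : Fin n → ℤ)
    (Tbig : Finset (Fin n))
    (hkey : ∀ T ⊆ Tbig, (∀ i ∈ T, ε * |u i| ≤ |∑ j ∈ T, u j|) ∨
        ∃ P ⊆ T, P.Nonempty ∧ ∑ j ∈ P, u j = 0)
    (hw : ∀ i ∈ Tbig, |(w i : ℝ) - u i| ≤ C) :
    ∀ N : ℕ, ∀ T ⊆ Tbig, T.card ≤ N → ∃ T', T' ⊆ T ∧
      |∑ i ∈ T \ T', (w i : ℝ)| ≤ ((T \ T').card : ℝ) * C ∧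
      ∀ i ∈ T', ε * |u i| ≤ |∑ j ∈ T', u j| := by
  intro N
  induction N with
  | zero =>
    intro T hT hcard
    have hTe : T = ∅ := Finset.card_eq_zero.mp (Nat.le_zero.mp hcard)
    subst hTe
    exact ⟨∅, Finset.Subset.refl _, by simp, by simp⟩
  | succ N ih =>
    intro T hT hcard
    rcases hkey T hT with h | ⟨P, hPT, hPne, hP0⟩
    · exact ⟨T, Finset.Subset.refl _, by simp, h⟩
    · have hcard2 : (T \ P).card ≤ N := by
        have h1 : 1 ≤ P.card := Finset.card_pos.mpr hPne
        have h2 := Finset.card_sdiff_of_subset hPT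
        have h3 := Finset.card_le_card hPT
        omega
      obtain ⟨T', hT'sub, hbound, hprop⟩ := ih (T \ P) ((Finset.sdiff_subset).trans hT) hcard2
      refine ⟨T', hT'sub.trans (Finset.sdiff_subset), ?_, hprop⟩
      have hunion : T \ T' = P ∪ ((T \ P) \ T') := by
        ext x
        simp only [Finset.mem_sdiff, Finset.mem_union]
        constructor
        · rintro ⟨hxT, hxT'⟩
          by_cases hxP : x ∈ P
          · exact Or.inl hxP
          · exact Or.inr ⟨⟨hxT, hxP⟩, hxT'⟩
        · rintro (hxP | ⟨⟨hxT, _⟩, hxT'⟩)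
          · exact ⟨hPT hxP, fun hx' => (Finset.mem_sdiff.mp (hT'sub hx')).2 hxP⟩
          · exact ⟨hxT, hxT'⟩
      have hdisj : Disjoint P ((T \ P) \ T') :=
        (Finset.disjoint_sdiff).mono_right (Finset.sdiff_subset)
      have hPsum : |∑ i ∈ P, (w i : ℝ)| ≤ (P.card : ℝ) * C := by
        have heq : ∑ i ∈ P, (w i : ℝ) = ∑ i ∈ P, ((w i : ℝ) - u i) := by
          rw [Finset.sum_sub_distrib, hP0, sub_zero]
        rw [heq]
        calc |∑ i ∈ P, ((w i : ℝ) - u i)| ≤ ∑ i ∈ P, |(w i : ℝ) - u i| :=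
              Finset.abs_sum_le_sum_abs _ _
          _ ≤ ∑ _i ∈ P, C := Finset.sum_le_sum fun i hi => hw i (hT (hPT hi))
          _ = (P.card : ℝ) * C := by rw [Finset.sum_const, nsmul_eq_mul]
      rw [hunion, Finset.sum_union hdisj, Finset.card_union_of_disjoint hdisj]
      calc |∑ i ∈ P, (w i:ℝ) + ∑ i ∈ (T\P)\T', (w i:ℝ)|
          ≤ |∑ i ∈ P, (w i:ℝ)| + |∑ i ∈ (T\P)\T', (w i:ℝ)| := abs_add_le _ _
        _ ≤ (P.card:ℝ)*C + (((T\P)\T').card : ℝ)*C := add_le_add hPsum hbound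
        _ = ((P.card + ((T\P)\T').card : ℕ) : ℝ) * C := by push_cast; ring

end Auxiliary

/-- If `A ⊆ ℤ⁺` is geometrically sparse then for every `n ≥ 1` there are
`c, d > 0` such that every nonzero `a ∈ Σ_n(±A)` can be written `a = a_1 + ⋯ + a_k + q`
with `k ≤ n`, each `a_i ∈ ±A` with `|a_i| < c|a|`, and `|q| ≤ d`. -/
theorem geomSparse_decomposition (A : Set ℤ) (hApos : ∀ x ∈ A, 0 < x) (hGS : GeomSparse A) :
    ∀ n : ℕ, 1 ≤ n → ∃ c d : ℝ, 0 < c ∧ 0 < d ∧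
      ∀ a ∈ sigmaSum n (pmSet A), a ≠ 0 →
        ∃ k : ℕ, k ≤ n ∧ ∃ (g : Fin k → ℤ) (q : ℤ),
          (∀ i, g i ∈ pmSet A ∧ (|g i| : ℝ) < c * (|a| : ℝ)) ∧
          (|q| : ℝ) ≤ d ∧ a = (∑ i, g i) + q := by
  classical
  intro n hn
  obtain ⟨f, hfpos, ⟨hcl, hd⟩, C₀, hC₀⟩ := hGS
  set C : ℝ := max C₀ 0 with hCdef
  have hC : 0 ≤ C := le_max_right _ _
  have hC' : ∀ a ∈ A, |(a : ℝ) - f a| ≤ C := fun a ha => (hC₀ a ha).trans (le_max_left _ _)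
  have hSpos : ∀ x ∈ f '' A, 0 < x := by rintro x ⟨b, hb, rfl⟩; exact hfpos b hb
  obtain ⟨ε, hε, hkey⟩ := key_lemma n (f '' A) hSpos hcl hd
  have hn1 : (1:ℝ) ≤ (n:ℝ) := by exact_mod_cast hn
  refine ⟨(1 + 2*n*C)/ε + C + 1, n*C + 1, by positivity, by positivity, ?_⟩
  intro a ha ha0
  simp only [sigmaSum, Set.mem_iUnion, Finset.mem_Icc] at ha
  obtain ⟨k₀, ⟨hk₀1, hk₀n⟩, hka⟩ := ha
  obtain ⟨w₀, hw₀mem, hw₀sum⟩ := hka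
  set emb : Fin k₀ ↪ Fin n := Fin.castLEEmb hk₀n with hembdef
  set Tbig : Finset (Fin n) := Finset.univ.map emb with hTbigdef
  set w : Fin n → ℤ := fun i => if h : (i : ℕ) < k₀ then w₀ ⟨i, h⟩ else 0 with hwdef
  set v : Fin n → ℝ := fun i => if h : (i : ℕ) < k₀ then
      (if 0 ≤ w₀ ⟨i, h⟩ then f |w₀ ⟨i, h⟩| else - f |w₀ ⟨i, h⟩|) else 0 with hvdef
  have hwemb : ∀ j : Fin k₀, w (emb j) = w₀ j := by
    intro j
    have hj : ((emb j : Fin n) : ℕ) < k₀ := j.isLt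
    simp only [hwdef]
    rw [dif_pos hj]
    rfl
  have hvemb : ∀ j : Fin k₀, v (emb j) =
      (if 0 ≤ w₀ j then f |w₀ j| else - f |w₀ j|) := by
    intro j
    have hj : ((emb j : Fin n) : ℕ) < k₀ := j.isLt
    simp only [hvdef]
    rw [dif_pos hj]
    rfl
  have hTbigcard : Tbig.card = k₀ := by
    rw [hTbigdef, Finset.card_map, Finset.card_univ, Fintype.card_fin]
  have hsumT : ∑ i ∈ Tbig, w i = a := by
    rw [hTbigdef, Finset.sum_map]
    rw [hw₀sum]
    exact Finset.sum_congr rfl (fun j _ => hwemb j)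
  -- pointwise facts on Tbig
  have hfacts : ∀ i ∈ Tbig, w i ∈ pmSet A ∧ |v i| ∈ f '' A ∧ |(w i : ℝ) - v i| ≤ C := by
    intro i hi
    rw [hTbigdef, Finset.mem_map] at hi
    obtain ⟨j, _, rfl⟩ := hi
    rw [hwemb j, hvemb j]
    have hmemA : |w₀ j| ∈ A := hw₀mem j
    have hfb : 0 < f |w₀ j| := hfpos _ hmemA
    have hdist := hC' _ hmemA
    refine ⟨hw₀mem j, ?_, ?_⟩
    · by_cases h : 0 ≤ w₀ j
      · rw [if_pos h, abs_of_pos hfb]; exact ⟨_, hmemA, rfl⟩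
      · rw [if_neg h, abs_neg, abs_of_pos hfb]; exact ⟨_, hmemA, rfl⟩
    · by_cases h : 0 ≤ w₀ j
      · rw [if_pos h]
        have hcast : ((w₀ j : ℝ)) = ((|w₀ j| : ℤ) : ℝ) := by rw [abs_of_nonneg h]
        rw [hcast]
        exact hdist
      · rw [if_neg h]
        have habs : |w₀ j| = -w₀ j := abs_of_neg (lt_of_not_ge h)
        have hcast : ((w₀ j : ℝ)) = -((|w₀ j| : ℤ) : ℝ) := by rw [habs]; push_cast; ring
        have h2 : ((w₀ j : ℝ)) - (- f |w₀ j|) = -(((|w₀ j| : ℤ) : ℝ) - f |w₀ j|) := by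
          rw [hcast]; ring
        rw [h2, abs_neg]
        exact hdist
  have hkey' : ∀ T ⊆ Tbig, (∀ i ∈ T, ε * |v i| ≤ |∑ j ∈ T, v j|) ∨
      ∃ P ⊆ T, P.Nonempty ∧ ∑ j ∈ P, v j = 0 :=
    fun T hTsub => hkey T v (fun i hi => (hfacts i (hTsub hi)).2.1)
  have hwv : ∀ i ∈ Tbig, |(w i : ℝ) - v i| ≤ C := fun i hi => (hfacts i hi).2.2
  obtain ⟨T', hT'sub, hqbound, hbig⟩ :=
    recur_lemma ε C hC v w Tbig hkey' hwv Tbig.card Tbig (Finset.Subset.refl _) le_rfl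
  set k := T'.card with hkdef
  have hkn : k ≤ n := by
    have h1 := Finset.card_le_card hT'sub
    rw [hTbigcard] at h1
    omega
  have hεne : ε ≠ 0 := hε.ne'
  set e := T'.equivFin with hedef
  have hgsum : ∑ i : Fin k, w ((e.symm i : {x // x ∈ T'}) : Fin n) = ∑ i ∈ T', w i := by
    rw [← Finset.sum_coe_sort T' w]
    exact Equiv.sum_comp e.symm (fun x : {x // x ∈ T'} => w (x : Fin n))
  have hqeq : a - ∑ i ∈ T', w i = ∑ i ∈ Tbig \ T', w i := by
    have h1 := Finset.sum_sdiff (f := w) hT'sub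
    rw [hsumT] at h1
    omega
  have hqabs : |((a - ∑ i ∈ T', w i : ℤ) : ℝ)| ≤ (n:ℝ) * C := by
    rw [hqeq]
    push_cast
    refine hqbound.trans ?_
    have hcard : ((Tbig \ T').card : ℝ) ≤ (n : ℝ) := by
      have h2 : (Tbig \ T').card ≤ Tbig.card := Finset.card_le_card (Finset.sdiff_subset)
      rw [hTbigcard] at h2
      exact_mod_cast h2.trans hk₀n
    exact mul_le_mul_of_nonneg_right hcard hC
  have hTsum : |∑ j ∈ T', v j| ≤ |(a:ℝ)| + 2*(n:ℝ)*C := by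
    have h1 : ∑ j ∈ T', v j = (∑ j ∈ T', (w j : ℝ)) + ∑ j ∈ T', (v j - (w j:ℝ)) := by
      rw [← Finset.sum_add_distrib]
      exact Finset.sum_congr rfl (fun j _ => by ring)
    have h2 : |∑ j ∈ T', (v j - (w j:ℝ))| ≤ (n:ℝ) * C := by
      calc |∑ j ∈ T', (v j - (w j:ℝ))| ≤ ∑ j ∈ T', |v j - (w j:ℝ)| :=
            Finset.abs_sum_le_sum_abs _ _
        _ ≤ ∑ _j ∈ T', C := Finset.sum_le_sum fun j hj => by
              rw [abs_sub_comm]; exact hwv j (hT'sub hj)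
        _ = (T'.card : ℝ) * C := by rw [Finset.sum_const, nsmul_eq_mul]
        _ ≤ (n:ℝ) * C := mul_le_mul_of_nonneg_right (by exact_mod_cast hkn) hC
    have h3 : |∑ j ∈ T', (w j:ℝ)| ≤ |(a:ℝ)| + (n:ℝ)*C := by
      have h4 : (∑ j ∈ T', (w j:ℝ)) = (a:ℝ) - ((a - ∑ i ∈ T', w i : ℤ):ℝ) := by
        push_cast; ring
      rw [h4]
      have h5 := abs_sub (a:ℝ) (((a - ∑ i ∈ T', w i : ℤ):ℝ))
      linarith [hqabs]
    rw [h1]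
    have h6 := abs_add_le (∑ j ∈ T', (w j:ℝ)) (∑ j ∈ T', (v j - (w j:ℝ)))
    linarith
  have hA1 : (1:ℝ) ≤ |(a:ℝ)| := by
    have h1 : (1:ℤ) ≤ |a| := Int.one_le_abs ha0
    calc (1:ℝ) ≤ ((|a| : ℤ) : ℝ) := by exact_mod_cast h1
      _ = |(a:ℝ)| := by push_cast; ring
  refine ⟨k, hkn, fun i => w ((e.symm i : {x // x ∈ T'}) : Fin n), a - ∑ i ∈ T', w i,
    ?_, ?_, ?_⟩
  · intro i
    set x := e.symm i with hxdef
    have hxT' : (x : Fin n) ∈ T' := x.2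
    have hxTbig : (x : Fin n) ∈ Tbig := hT'sub hxT'
    refine ⟨(hfacts _ hxTbig).1, ?_⟩
    have hb := hbig _ hxT'
    have h5 : ε * |v (x : Fin n)| ≤ |(a:ℝ)| + 2*(n:ℝ)*C := le_trans hb hTsum
    have hwle : |((w (x : Fin n)) : ℝ)| ≤ |v (x : Fin n)| + C := by
      have h6 := hwv _ hxTbig
      have h7 := abs_add_le (((w (x : Fin n)) : ℝ) - v (x : Fin n)) (v (x : Fin n))
      rw [sub_add_cancel] at h7
      linarith
    have hεw : ε * |((w (x : Fin n)) : ℝ)| ≤ |(a:ℝ)| + 2*(n:ℝ)*C + ε*C := by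
      have h8 := mul_le_mul_of_nonneg_left hwle hε.le
      nlinarith
    have hrhs : |(a:ℝ)| + 2*(n:ℝ)*C + ε*C + ε ≤
        ε * (((1 + 2*(n:ℝ)*C)/ε + C + 1) * |(a:ℝ)|) := by
      have hexp : ε * (((1 + 2*(n:ℝ)*C)/ε + C + 1) * |(a:ℝ)|)
          = (1 + 2*(n:ℝ)*C)*|(a:ℝ)| + ε*C*|(a:ℝ)| + ε*|(a:ℝ)| := by
        field_simp
      rw [hexp]
      nlinarith [mul_nonneg (mul_nonneg (by positivity : (0:ℝ) ≤ 2*(n:ℝ)) hC)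
          (sub_nonneg.mpr hA1),
        mul_nonneg (mul_nonneg hε.le hC) (sub_nonneg.mpr hA1),
        mul_nonneg hε.le (sub_nonneg.mpr hA1)]
    have hfinal : ε * |((w (x : Fin n)) : ℝ)| <
        ε * (((1 + 2*(n:ℝ)*C)/ε + C + 1) * |(a:ℝ)|) := by linarith
    have hlt := lt_of_mul_lt_mul_left hfinal hε.le
    push_cast
    exact hlt
  · have h9 := hqabs
    push_cast at h9 ⊢
    linarith
  · rw [hgsum]
    ring
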